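/- Let G' be a finite multigraph whose vertex set is partitioned into a set W and a nonempty set H, and let Δ, Z, d, p be real numbers such that: every vertex of H is incident (with multiplicity) to at most Δ edges whose other endpoint lies in W; every vertex of W is incident to at most Z edges whose other endpoint lies in H, and to at most d edges whose other endpoint lies in W; and for every nonempty subset S ⊆ H with 2·|S| ≤ |H|, the number of edges (with multiplicity) with one endpoint in S and the other in H ∖ S is at least p·|S|. If p > 3Δ + 3Z + d, then in every linear arrangement of G' of minimum cost, the set H is consecutive. -/

import Mathlib

open Finset

/-- Number of edges (with multiplicity) of the multigraph with edge family `E` that are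
incident to `v` and whose other endpoint lies in `S`. -/
def degTo {V : Type*} [DecidableEq V] {ι : Type*} [Fintype ι]
    (E : ι → V × V) (v : V) (S : Finset V) : ℕ :=
  (Finset.univ.filter fun i =>
    ((E i).1 = v ∧ (E i).2 ∈ S) ∨ ((E i).2 = v ∧ (E i).1 ∈ S)).card

/-- Number of edges (with multiplicity) with one endpoint in `S` and the other in `T`. -/
def edgesBetween {V : Type*} [DecidableEq V] {ι : Type*} [Fintype ι]
    (E : ι → V × V) (S T : Finset V) : ℕ :=
  (Finset.univ.filter fun i =>
    ((E i).1 ∈ S ∧ (E i).2 ∈ T) ∨ ((E i).1 ∈ T ∧ (E i).2 ∈ S)).card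

/-- Cost of a placement `f : V → ℤ` of the vertices of the multigraph with edge family `E`
on the integer line: the sum over the edges of the distance between the two endpoints. -/
def mcost {V : Type*} {ι : Type*} [Fintype ι] (E : ι → V × V) (f : V → ℤ) : ℤ :=
  ∑ i, |f (E i).1 - f (E i).2|

/-- shift: position `g` goes to `m`, positions in `[m,g)` move up one. -/
def sigf (m g x : ℕ) : ℕ := if x = g then m else if m ≤ x ∧ x < g then x + 1 else x

def tauf (m g x : ℕ) : ℕ := if x = m then g else if m < x ∧ x ≤ g then x - 1 else x

section Aux

variable {V : Type*} [Fintype V] [DecidableEq V] {ι : Type*} [Fintype ι]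

lemma run_card (H : Finset V) (π : V ≃ Fin (Fintype.card V)) (m g : ℕ)
    (hm : ∀ v ∈ H, m ≤ (π v : ℕ))
    (hrun : ∀ v, m ≤ (π v : ℕ) → (π v : ℕ) < g → v ∈ H)
    (hgN : g ≤ Fintype.card V) :
    (H.filter fun v => (π v : ℕ) < g).card = g - m := by
  rw [← Nat.card_Ico m g]
  apply Finset.card_bij (fun v _ => (π v : ℕ))
  · intro a ha
    rw [Finset.mem_filter] at ha
    rw [Finset.mem_Ico]
    exact ⟨hm a ha.1, ha.2⟩
  · intro a _ b _ hab
    exact π.injective (Fin.ext hab)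
  · intro j hj
    rw [Finset.mem_Ico] at hj
    have hjN : j < Fintype.card V := lt_of_lt_of_le hj.2 hgN
    refine ⟨π.symm ⟨j, hjN⟩, ?_, by simp⟩
    have hval : (π (π.symm ⟨j, hjN⟩) : ℕ) = j := by simp
    rw [Finset.mem_filter]
    refine ⟨hrun _ (by rw [hval]; exact hj.1) (by rw [hval]; exact hj.2), by rw [hval]; exact hj.2⟩

lemma gap (H : Finset V) (π : V ≃ Fin (Fintype.card V))
    (hnc : ¬ ∃ a : ℕ, ∀ v, v ∈ H ↔ a ≤ (π v : ℕ) ∧ (π v : ℕ) < a + H.card) :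
    ∃ m g w, m < g ∧ g < m + H.card ∧ (∀ v ∈ H, m ≤ (π v : ℕ)) ∧
      (∀ v, m ≤ (π v : ℕ) → (π v : ℕ) < g → v ∈ H) ∧ w ∉ H ∧ (π w : ℕ) = g := by
  have hHne : H.Nonempty := by
    rcases H.eq_empty_or_nonempty with h | h
    · exact absurd ⟨0, fun v => by simp [h]⟩ hnc
    · exact h
  set k := H.card with hk
  set P := H.image (fun v => (π v : ℕ)) with hP
  have hPcard : P.card = k := Finset.card_image_of_injective H
    (fun a b hab => π.injective (Fin.ext hab))
  have hPne : P.Nonempty := hHne.image _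
  set m := P.min' hPne with hm_def
  have hm : ∀ v ∈ H, m ≤ (π v : ℕ) := fun v hv =>
    Finset.min'_le _ _ (Finset.mem_image_of_mem _ hv)
  have hmm : ∃ v ∈ H, (π v : ℕ) = m := Finset.mem_image.mp (P.min'_mem hPne)
  have hN : m + k ≤ Fintype.card V := by
    have hsub : P ⊆ Finset.Ico m (Fintype.card V) := by
      intro j hj
      rw [Finset.mem_Ico]
      refine ⟨Finset.min'_le _ _ hj, ?_⟩
      rw [hP, Finset.mem_image] at hj
      obtain ⟨v, -, hv⟩ := hj
      rw [← hv]; exact (π v).isLt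
    have hcc := Finset.card_le_card hsub
    rw [hPcard, Nat.card_Ico] at hcc
    obtain ⟨v, -, hv⟩ := hmm
    have := (π v).isLt
    omega
  set T := (Finset.range (m + k)).filter (fun j => m ≤ j ∧ ∀ v ∈ H, (π v : ℕ) ≠ j) with hT
  have hTne : T.Nonempty := by
    by_contra hTe
    apply hnc
    refine ⟨m, fun v => ?_⟩
    have hit : ∀ j, m ≤ j → j < m + k → ∃ u, u ∈ H ∧ (π u : ℕ) = j := by
      intro j h1 h2
      by_contra hno
      push_neg at hno
      exact hTe ⟨j, by
        rw [hT, Finset.mem_filter, Finset.mem_range]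
        exact ⟨h2, h1, hno⟩⟩
    have hrun' : ∀ u, m ≤ (π u : ℕ) → (π u : ℕ) < m + k → u ∈ H := by
      intro u h1 h2
      obtain ⟨u', hu', he⟩ := hit _ h1 h2
      have : u' = u := π.injective (Fin.ext he)
      rwa [← this]
    have hfill : (H.filter fun u => (π u : ℕ) < m + k) = H := by
      apply Finset.eq_of_subset_of_card_le (Finset.filter_subset _ _)
      rw [run_card H π m (m + k) hm hrun' hN]
      omega
    constructor
    · intro hv
      refine ⟨hm v hv, ?_⟩
      have hv' : v ∈ H.filter fun u => (π u : ℕ) < m + k := by rw [hfill]; exact hv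
      exact (Finset.mem_filter.mp hv').2
    · rintro ⟨h1, h2⟩
      exact hrun' v h1 h2
  set g := T.min' hTne with hg
  have hgT := Finset.mem_filter.mp (T.min'_mem hTne)
  obtain ⟨hgk', hmg', hgavoid⟩ := hgT
  have hgk : g < m + k := Finset.mem_range.mp hgk'
  have hrun : ∀ v, m ≤ (π v : ℕ) → (π v : ℕ) < g → v ∈ H := by
    intro v h1 h2
    by_contra hv
    have hmemT : (π v : ℕ) ∈ T := by
      rw [hT, Finset.mem_filter, Finset.mem_range]
      refine ⟨by omega, h1, ?_⟩
      intro u hu he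
      have : u = v := π.injective (Fin.ext he)
      exact hv (this ▸ hu)
    exact absurd (Finset.min'_le _ _ hmemT) (by omega)
  have hmg : m < g := by
    rcases Nat.lt_or_ge m g with h | h
    · exact h
    · exfalso
      obtain ⟨v, hv, he⟩ := hmm
      have := hgavoid v hv
      omega
  have hgN : g < Fintype.card V := by omega
  refine ⟨m, g, π.symm ⟨g, hgN⟩, hmg, hgk, hm, hrun, ?_, by simp⟩
  intro hw
  exact hgavoid _ hw (by simp; exact hg)

lemma mcost_rev (E : ι → V × V) (π : V ≃ Fin (Fintype.card V)) :
    mcost E (fun v => (((π.trans Fin.revPerm) v : ℕ) : ℤ)) =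
      mcost E (fun v => ((π v : ℕ) : ℤ)) := by
  unfold mcost
  apply Finset.sum_congr rfl
  intro i _
  have h1 := (π (E i).1).isLt
  have h2 := (π (E i).2).isLt
  have hr : ∀ v : V, ((π.trans Fin.revPerm) v : ℕ) = Fintype.card V - 1 - (π v : ℕ) := by
    intro v
    simp only [Equiv.trans_apply, Fin.revPerm_apply, Fin.val_rev]
    omega
  simp only [hr, Int.abs_eq_natAbs]
  omega

end Aux

section Improve
variable {V : Type*} [Fintype V] [DecidableEq V] {ι : Type*} [Fintype ι]

lemma improve (E : ι → V × V) (H : Finset V)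
    (Δ Z d p : ℝ)
    (hΔ : ∀ v ∈ H, (degTo E v Hᶜ : ℝ) ≤ Δ)
    (hZ : ∀ v ∈ Hᶜ, (degTo E v H : ℝ) ≤ Z)
    (hd : ∀ v ∈ Hᶜ, (degTo E v Hᶜ : ℝ) ≤ d)
    (hexp : ∀ S : Finset V, S ⊆ H → S.Nonempty → 2 * S.card ≤ H.card →
      p * S.card ≤ (edgesBetween E S (H \ S) : ℝ))
    (hineq : 3 * Δ + 3 * Z + d < p)
    (π : V ≃ Fin (Fintype.card V))
    (hopt : ∀ π' : V ≃ Fin (Fintype.card V),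
      mcost E (fun v => ((π v : ℕ) : ℤ)) ≤ mcost E (fun v => ((π' v : ℕ) : ℤ)))
    (m g : ℕ) (w : V) (hwH : w ∉ H) (hwg : (π w : ℕ) = g)
    (hm : ∀ v ∈ H, m ≤ (π v : ℕ))
    (hrun : ∀ v, m ≤ (π v : ℕ) → (π v : ℕ) < g → v ∈ H)
    (hmg : m < g) (hgk : g < m + H.card) (h2 : 2 * (g - m) ≤ H.card) : False := by
  classical
  have hgN : g < Fintype.card V := by rw [← hwg]; exact (π w).isLt
  -- the permutation σ
  let σ : Equiv.Perm (Fin (Fintype.card V)) :=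
  { toFun := fun x => ⟨sigf m g x.val, by
      have hx := x.isLt
      simp only [sigf]
      split_ifs <;> omega⟩
    invFun := fun x => ⟨tauf m g x.val, by
      have hx := x.isLt
      simp only [tauf]
      split_ifs <;> omega⟩
    left_inv := by
      intro x
      apply Fin.ext
      show tauf m g (sigf m g x.val) = x.val
      have hx := x.isLt
      simp only [sigf, tauf]
      split_ifs <;> omega
    right_inv := by
      intro x
      apply Fin.ext
      show sigf m g (tauf m g x.val) = x.val
      have hx := x.isLt
      simp only [sigf, tauf]
      split_ifs <;> omega }
  set S := H.filter (fun v => (π v : ℕ) < g) with hSdef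
  have hSsub : S ⊆ H := Finset.filter_subset _ _
  have hScard : S.card = g - m := run_card H π m g hm hrun (le_of_lt hgN)
  have hHS : ∀ v ∈ H \ S, g < (π v : ℕ) := by
    intro v hv
    rw [Finset.mem_sdiff] at hv
    have h1 : ¬ ((π v : ℕ) < g) := fun h => hv.2 (Finset.mem_filter.mpr ⟨hv.1, h⟩)
    have h2 : (π v : ℕ) ≠ g := by
      intro h
      exact hwH (π.injective (Fin.ext (h.trans hwg.symm)) ▸ hv.1)
    omega
  set C := Finset.univ.filter (fun i : ι => (E i).1 = w ∨ (E i).2 = w) with hCdef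
  set B := Finset.univ.filter (fun i : ι =>
      ((E i).1 ∈ S ∧ (E i).2 ∈ H \ S) ∨ ((E i).1 ∈ H \ S ∧ (E i).2 ∈ S)) with hBdef
  set A := Finset.univ.filter (fun i : ι => ¬((E i).1 = w ∨ (E i).2 = w) ∧
      ((m ≤ (π (E i).1 : ℕ) ∧ (π (E i).1 : ℕ) < g ∧ (π (E i).2 : ℕ) < m) ∨
       (m ≤ (π (E i).2 : ℕ) ∧ (π (E i).2 : ℕ) < g ∧ (π (E i).1 : ℕ) < m))) with hAdef
  have memC : ∀ i : ι, i ∈ C ↔ ((E i).1 = w ∨ (E i).2 = w) := by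
    intro i; rw [hCdef, Finset.mem_filter]; simp
  have memB : ∀ i : ι, i ∈ B ↔
      (((E i).1 ∈ S ∧ (E i).2 ∈ H \ S) ∨ ((E i).1 ∈ H \ S ∧ (E i).2 ∈ S)) := by
    intro i; rw [hBdef, Finset.mem_filter]; simp
  have memA : ∀ i : ι, i ∈ A ↔ (¬((E i).1 = w ∨ (E i).2 = w) ∧
      ((m ≤ (π (E i).1 : ℕ) ∧ (π (E i).1 : ℕ) < g ∧ (π (E i).2 : ℕ) < m) ∨
       (m ≤ (π (E i).2 : ℕ) ∧ (π (E i).2 : ℕ) < g ∧ (π (E i).1 : ℕ) < m))) := by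
    intro i; rw [hAdef, Finset.mem_filter]; simp
  -- per-edge bound and summation
  have step1 : mcost E (fun v => (((π.trans σ) v : ℕ) : ℤ)) -
      mcost E (fun v => ((π v : ℕ) : ℤ)) ≤
      ∑ i : ι, ((if i ∈ A then (1 : ℤ) else 0) +
        ((g - m : ℕ) : ℤ) * (if i ∈ C then 1 else 0) - (if i ∈ B then 1 else 0)) := by
    rw [mcost, mcost, ← Finset.sum_sub_distrib]
    apply Finset.sum_le_sum
    intro i _
    have e1 : (((π.trans σ) (E i).1 : Fin (Fintype.card V)) : ℕ) = sigf m g (π (E i).1 : ℕ) := rfl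
    have e2 : (((π.trans σ) (E i).2 : Fin (Fintype.card V)) : ℕ) = sigf m g (π (E i).2 : ℕ) := rfl
    have hx := (π (E i).1).isLt
    have hy := (π (E i).2).isLt
    have hxw : (π (E i).1 : ℕ) = g → (E i).1 = w := fun h => π.injective (Fin.ext (h.trans hwg.symm))
    have hyw : (π (E i).2 : ℕ) = g → (E i).2 = w := fun h => π.injective (Fin.ext (h.trans hwg.symm))
    by_cases hCi : i ∈ C
    · have hC' := (memC i).mp hCi
      have hA' : i ∉ A := fun hAi => ((memA i).mp hAi).1 hC'
      have hB' : i ∉ B := by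
        intro hBi
        rcases (memB i).mp hBi with ⟨h1, h2⟩ | ⟨h1, h2⟩ <;> rcases hC' with hc | hc
        · exact hwH (hSsub (hc ▸ h1))
        · exact hwH (Finset.mem_sdiff.mp (hc ▸ h2)).1
        · exact hwH (Finset.mem_sdiff.mp (hc ▸ h1)).1
        · exact hwH (hSsub (hc ▸ h2))
      have hxy : (π (E i).1 : ℕ) = g ∨ (π (E i).2 : ℕ) = g := by
        rcases hC' with h | h
        · exact Or.inl (by rw [h, hwg])
        · exact Or.inr (by rw [h, hwg])
      simp only [e1, e2, if_pos hCi, if_neg hA', if_neg hB', mul_one]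
      simp only [sigf, Int.abs_eq_natAbs]
      split_ifs <;> omega
    · by_cases hBi : i ∈ B
      · have p1 : m ≤ (π (E i).1 : ℕ) := by
          rcases (memB i).mp hBi with ⟨h1, -⟩ | ⟨h1, -⟩
          · exact hm _ (hSsub h1)
          · exact hm _ (Finset.mem_sdiff.mp h1).1
        have p2 : m ≤ (π (E i).2 : ℕ) := by
          rcases (memB i).mp hBi with ⟨-, h1⟩ | ⟨-, h1⟩
          · exact hm _ (Finset.mem_sdiff.mp h1).1
          · exact hm _ (hSsub h1)
        have hA' : i ∉ A := by
          intro hAi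
          rcases ((memA i).mp hAi).2 with ⟨-, -, h3⟩ | ⟨-, -, h3⟩ <;> omega
        have hpos : ((π (E i).1 : ℕ) < g ∧ g < (π (E i).2 : ℕ)) ∨
            ((π (E i).2 : ℕ) < g ∧ g < (π (E i).1 : ℕ)) := by
          rcases (memB i).mp hBi with ⟨h1, h2⟩ | ⟨h1, h2⟩
          · exact Or.inl ⟨(Finset.mem_filter.mp h1).2, hHS _ h2⟩
          · exact Or.inr ⟨(Finset.mem_filter.mp h2).2, hHS _ h1⟩
        simp only [e1, e2, if_neg hCi, if_pos hBi, if_neg hA', mul_zero]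
        simp only [sigf, Int.abs_eq_natAbs]
        split_ifs <;> omega
      · have hx' : (π (E i).1 : ℕ) ≠ g := fun h => hCi ((memC i).mpr (Or.inl (hxw h)))
        have hy' : (π (E i).2 : ℕ) ≠ g := fun h => hCi ((memC i).mpr (Or.inr (hyw h)))
        by_cases hAi : i ∈ A
        · simp only [e1, e2, if_pos hAi, if_neg hCi, if_neg hBi, mul_zero]
          simp only [sigf, Int.abs_eq_natAbs]
          split_ifs <;> omega
        · have hor : ¬ ((m ≤ (π (E i).1 : ℕ) ∧ (π (E i).1 : ℕ) < g ∧ (π (E i).2 : ℕ) < m) ∨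
              (m ≤ (π (E i).2 : ℕ) ∧ (π (E i).2 : ℕ) < g ∧ (π (E i).1 : ℕ) < m)) := by
            intro h
            exact hAi ((memA i).mpr ⟨fun hc => hCi ((memC i).mpr hc), h⟩)
          simp only [e1, e2, if_neg hAi, if_neg hCi, if_neg hBi, mul_zero]
          simp only [sigf, Int.abs_eq_natAbs]
          split_ifs <;> omega
  have hind : ∀ D : Finset ι, ∑ i : ι, (if i ∈ D then (1 : ℤ) else 0) = (D.card : ℤ) := by
    intro D
    rw [Finset.sum_ite_mem, Finset.univ_inter, Finset.sum_const]; simp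
  have sumF : ∑ i : ι, ((if i ∈ A then (1 : ℤ) else 0) +
      ((g - m : ℕ) : ℤ) * (if i ∈ C then 1 else 0) - (if i ∈ B then 1 else 0)) =
      (A.card : ℤ) + ((g - m : ℕ) : ℤ) * (C.card : ℤ) - (B.card : ℤ) := by
    rw [Finset.sum_sub_distrib, Finset.sum_add_distrib, ← Finset.mul_sum, hind, hind, hind]
  -- card bounds
  have hAcard : (A.card : ℝ) ≤ ((g - m : ℕ) : ℝ) * Δ := by
    have hsub : A ⊆ S.biUnion (fun u => Finset.univ.filter (fun i =>
        ((E i).1 = u ∧ (E i).2 ∈ Hᶜ) ∨ ((E i).2 = u ∧ (E i).1 ∈ Hᶜ))) := by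
      intro i hi
      obtain ⟨hnw, hor⟩ := (memA i).mp hi
      rcases hor with ⟨h1, h2, h3⟩ | ⟨h1, h2, h3⟩
      · have huH : (E i).1 ∈ H := hrun _ h1 h2
        have huS : (E i).1 ∈ S := Finset.mem_filter.mpr ⟨huH, h2⟩
        have hvW : (E i).2 ∈ Hᶜ := by
          rw [Finset.mem_compl]
          intro h
          exact absurd (hm _ h) (by omega)
        exact Finset.mem_biUnion.mpr ⟨_, huS,
          Finset.mem_filter.mpr ⟨Finset.mem_univ _, Or.inl ⟨rfl, hvW⟩⟩⟩
      · have huH : (E i).2 ∈ H := hrun _ h1 h2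
        have huS : (E i).2 ∈ S := Finset.mem_filter.mpr ⟨huH, h2⟩
        have hvW : (E i).1 ∈ Hᶜ := by
          rw [Finset.mem_compl]
          intro h
          exact absurd (hm _ h) (by omega)
        exact Finset.mem_biUnion.mpr ⟨_, huS,
          Finset.mem_filter.mpr ⟨Finset.mem_univ _, Or.inr ⟨rfl, hvW⟩⟩⟩
    have h1 : (A.card : ℝ) ≤ ∑ u ∈ S, (degTo E u Hᶜ : ℝ) := by
      have := le_trans (Finset.card_le_card hsub) Finset.card_biUnion_le
      calc (A.card : ℝ) ≤ ((∑ u ∈ S, (Finset.univ.filter (fun i =>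
            ((E i).1 = u ∧ (E i).2 ∈ Hᶜ) ∨ ((E i).2 = u ∧ (E i).1 ∈ Hᶜ))).card : ℕ) : ℝ) := by
            exact_mod_cast this
        _ = ∑ u ∈ S, (degTo E u Hᶜ : ℝ) := by
            rw [Nat.cast_sum]; rfl
    calc (A.card : ℝ) ≤ ∑ u ∈ S, (degTo E u Hᶜ : ℝ) := h1
      _ ≤ ∑ u ∈ S, Δ := Finset.sum_le_sum (fun u hu => hΔ u (hSsub hu))
      _ = (S.card : ℝ) * Δ := by rw [Finset.sum_const, nsmul_eq_mul]
      _ = ((g - m : ℕ) : ℝ) * Δ := by rw [hScard]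
  have hwW : w ∈ Hᶜ := Finset.mem_compl.mpr hwH
  have hCcard : (C.card : ℝ) ≤ Z + d := by
    have hsub : C ⊆ (Finset.univ.filter (fun i =>
        ((E i).1 = w ∧ (E i).2 ∈ H) ∨ ((E i).2 = w ∧ (E i).1 ∈ H))) ∪
        (Finset.univ.filter (fun i =>
        ((E i).1 = w ∧ (E i).2 ∈ Hᶜ) ∨ ((E i).2 = w ∧ (E i).1 ∈ Hᶜ))) := by
      intro i hi
      rw [Finset.mem_union]
      rcases (memC i).mp hi with h | h
      · by_cases h2 : (E i).2 ∈ H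
        · exact Or.inl (Finset.mem_filter.mpr ⟨Finset.mem_univ _, Or.inl ⟨h, h2⟩⟩)
        · exact Or.inr (Finset.mem_filter.mpr ⟨Finset.mem_univ _,
            Or.inl ⟨h, Finset.mem_compl.mpr h2⟩⟩)
      · by_cases h2 : (E i).1 ∈ H
        · exact Or.inl (Finset.mem_filter.mpr ⟨Finset.mem_univ _, Or.inr ⟨h, h2⟩⟩)
        · exact Or.inr (Finset.mem_filter.mpr ⟨Finset.mem_univ _,
            Or.inr ⟨h, Finset.mem_compl.mpr h2⟩⟩)
    have h1 : C.card ≤ degTo E w H + degTo E w Hᶜ :=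
      le_trans (Finset.card_le_card hsub) (Finset.card_union_le _ _)
    calc (C.card : ℝ) ≤ (degTo E w H : ℝ) + (degTo E w Hᶜ : ℝ) := by exact_mod_cast h1
      _ ≤ Z + d := add_le_add (hZ w hwW) (hd w hwW)
  have hBcard : p * ((g - m : ℕ) : ℝ) ≤ (B.card : ℝ) := by
    have hBeq : edgesBetween E S (H \ S) = B.card := by rw [hBdef]; rfl
    have hne : S.Nonempty := Finset.card_pos.mp (by rw [hScard]; omega)
    have := hexp S hSsub hne (by rw [hScard]; exact h2)
    rw [hScard] at this
    rw [← hBeq]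
    exact this
  -- put everything together
  have hopt' := hopt (π.trans σ)
  have hreal : ((mcost E (fun v => (((π.trans σ) v : ℕ) : ℤ)) : ℝ)) -
      ((mcost E (fun v => ((π v : ℕ) : ℤ)) : ℝ)) ≤
      (A.card : ℝ) + ((g - m : ℕ) : ℝ) * (C.card : ℝ) - (B.card : ℝ) := by
    have := step1.trans_eq sumF
    exact_mod_cast this
  have hoptR : ((mcost E (fun v => ((π v : ℕ) : ℤ)) : ℝ)) ≤
      ((mcost E (fun v => (((π.trans σ) v : ℕ) : ℤ)) : ℝ)) := by exact_mod_cast hopt'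
  -- nonnegativity
  have hΔ0 : 0 ≤ Δ := by
    have hv0 : π.symm ⟨m, by omega⟩ ∈ H := by
      apply hrun
      · simp
      · simp [hmg]
    exact le_trans (Nat.cast_nonneg _) (hΔ _ hv0)
  have hZ0 : 0 ≤ Z := le_trans (Nat.cast_nonneg _) (hZ w hwW)
  have hd0 : 0 ≤ d := le_trans (Nat.cast_nonneg _) (hd w hwW)
  have hh1 : 1 ≤ ((g - m : ℕ) : ℝ) := by
    have : 1 ≤ g - m := by omega
    exact_mod_cast this
  have e1 : ((g - m : ℕ) : ℝ) * (C.card : ℝ) ≤ ((g - m : ℕ) : ℝ) * (Z + d) :=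
    mul_le_mul_of_nonneg_left hCcard (by positivity)
  have e2 : ((g - m : ℕ) : ℝ) * (Δ + Z + d - p) ≤ 1 * (Δ + Z + d - p) := by
    apply mul_le_mul_of_nonpos_right hh1
    linarith
  have e3 : ((g - m : ℕ) : ℝ) * Δ + ((g - m : ℕ) : ℝ) * (Z + d) - p * ((g - m : ℕ) : ℝ) =
      ((g - m : ℕ) : ℝ) * (Δ + Z + d - p) := by ring
  linarith

end Improve

/-- If the vertex set of the multigraph `G'` (given by the edge family `E`) is partitioned
into `W = Hᶜ` and a nonempty set `H` such that every vertex of `H` sends at most `Δ` edges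
to `W`, every vertex of `W` sends at most `Z` edges to `H` and at most `d` edges within
`W`, every "small half" `S ⊆ H` expands by a factor of at least `p` inside `H`, and
`p > 3Δ + 3Z + d`, then in every minimum-cost linear arrangement of `G'` the set `H`
occupies a consecutive block of positions. -/
theorem expander_block_consecutive
    {V : Type*} [Fintype V] [DecidableEq V] {ι : Type*} [Fintype ι]
    (E : ι → V × V) (H : Finset V) (hHne : H.Nonempty)
    (Δ Z d p : ℝ)
    (hΔ : ∀ v ∈ H, (degTo E v Hᶜ : ℝ) ≤ Δ)
    (hZ : ∀ v ∈ Hᶜ, (degTo E v H : ℝ) ≤ Z)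
    (hd : ∀ v ∈ Hᶜ, (degTo E v Hᶜ : ℝ) ≤ d)
    (hexp : ∀ S : Finset V, S ⊆ H → S.Nonempty → 2 * S.card ≤ H.card →
      p * S.card ≤ (edgesBetween E S (H \ S) : ℝ))
    (hineq : 3 * Δ + 3 * Z + d < p)
    (π : V ≃ Fin (Fintype.card V))
    (hopt : ∀ π' : V ≃ Fin (Fintype.card V),
      mcost E (fun v => ((π v : ℕ) : ℤ)) ≤ mcost E (fun v => ((π' v : ℕ) : ℤ))) :
    ∃ a : ℕ, ∀ v, v ∈ H ↔ a ≤ (π v : ℕ) ∧ (π v : ℕ) < a + H.card := by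
  classical
  by_contra hnc
  obtain ⟨m, g, w, hmg, hgk, hm, hrun, hwH, hwg⟩ := gap H π hnc
  by_cases h2 : 2 * (g - m) ≤ H.card
  · exact improve E H Δ Z d p hΔ hZ hd hexp hineq π hopt m g w hwH hwg hm hrun hmg hgk h2
  · push_neg at h2
    set πr := π.trans Fin.revPerm with hπr
    have hrv : ∀ v : V, (πr v : ℕ) = Fintype.card V - 1 - (π v : ℕ) := by
      intro v
      simp only [hπr, Equiv.trans_apply, Fin.revPerm_apply, Fin.val_rev]
      omega
    have hcost := mcost_rev E π
    have hoptr : ∀ π'' : V ≃ Fin (Fintype.card V),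
        mcost E (fun v => ((πr v : ℕ) : ℤ)) ≤ mcost E (fun v => ((π'' v : ℕ) : ℤ)) := by
      intro π''
      rw [hπr, hcost]
      exact hopt π''
    have hncr : ¬ ∃ a : ℕ, ∀ v, v ∈ H ↔ a ≤ (πr v : ℕ) ∧ (πr v : ℕ) < a + H.card := by
      rintro ⟨a, ha⟩
      apply hnc
      -- first: a + H.card ≤ N
      have hak : a + H.card ≤ Fintype.card V := by
        have hPcard : (H.image (fun v => (πr v : ℕ))).card = H.card :=
          Finset.card_image_of_injective H (fun x y hxy => πr.injective (Fin.ext hxy))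
        have hsub : H.image (fun v => (πr v : ℕ)) ⊆ Finset.Ico a (Fintype.card V) := by
          intro j hj
          rw [Finset.mem_image] at hj
          obtain ⟨v, hv, hvj⟩ := hj
          rw [Finset.mem_Ico, ← hvj]
          exact ⟨((ha v).mp hv).1, (πr v).isLt⟩
        have := Finset.card_le_card hsub
        rw [hPcard, Nat.card_Ico] at this
        obtain ⟨v0, hv0⟩ := hHne
        have h1 := ((ha v0).mp hv0).1
        have h2 := (πr v0).isLt
        omega
      refine ⟨Fintype.card V - a - H.card, fun v => ?_⟩
      have hv := ha v
      rw [hrv] at hv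
      have hlt := (π v).isLt
      constructor
      · intro h
        have := hv.mp h
        omega
      · intro h
        exact hv.mpr (by omega)
    obtain ⟨m2, g2, w2, hmg2, hgk2, hm2, hrun2, hwH2, hwg2⟩ := gap H πr hncr
    have hgN : g < Fintype.card V := by rw [← hwg]; exact (π w).isLt
    have hg2N : g2 < Fintype.card V := by rw [← hwg2]; exact (πr w2).isLt
    set S1 := H.filter (fun v => (π v : ℕ) < g) with hS1def
    set S2 := H.filter (fun v => (πr v : ℕ) < g2) with hS2def
    have hS1 : S1.card = g - m := run_card H π m g hm hrun (le_of_lt hgN)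
    have hS2 : S2.card = g2 - m2 := run_card H πr m2 g2 hm2 hrun2 (le_of_lt hg2N)
    -- exists v in H with g < π v
    have hbig : ∃ v ∈ H, g < (π v : ℕ) := by
      have hns : ¬ H ⊆ S1 := by
        intro hsub
        have := Finset.card_le_card hsub
        rw [hS1] at this
        omega
      obtain ⟨v, hvH, hvS⟩ := Finset.not_subset.mp hns
      refine ⟨v, hvH, ?_⟩
      have h1 : ¬ ((π v : ℕ) < g) := fun h => hvS (Finset.mem_filter.mpr ⟨hvH, h⟩)
      have hne : (π v : ℕ) ≠ g := by
        intro h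
        exact hwH (π.injective (Fin.ext (h.trans hwg.symm)) ▸ hvH)
      omega
    obtain ⟨v0, hv0H, hv0g⟩ := hbig
    -- m2 ≤ πr w and w ∉ H gives g2 ≤ πr w
    have hπrw : (πr w : ℕ) = Fintype.card V - 1 - g := by rw [hrv, hwg]
    have hm2w : m2 ≤ (πr w : ℕ) := by
      have h1 := hm2 v0 hv0H
      have h2 := hrv v0
      have h3 := (π v0).isLt
      rw [hπrw]
      omega
    have hg2w : g2 ≤ (πr w : ℕ) := by
      by_contra hlt
      push_neg at hlt
      exact hwH (hrun2 w hm2w hlt)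
    -- S1, S2 disjoint
    have hdisj : Disjoint S1 S2 := by
      rw [Finset.disjoint_left]
      intro v hv1 hv2
      have h1 := (Finset.mem_filter.mp hv1).2
      have h2 := (Finset.mem_filter.mp hv2).2
      have h3 := hrv v
      have h4 := (π v).isLt
      rw [hπrw] at hg2w
      omega
    have hcards : S1.card + S2.card ≤ H.card := by
      rw [← Finset.card_union_of_disjoint hdisj]
      exact Finset.card_le_card (Finset.union_subset (Finset.filter_subset _ _)
        (Finset.filter_subset _ _))
    have h22 : 2 * (g2 - m2) ≤ H.card := by omega
    exact improve E H Δ Z d p hΔ hZ hd hexp hineq πr hoptr m2 g2 w2 hwH2 hwg2 hm2 hrun2 hmg2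
      hgk2 h22
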